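/- Let X be a set and R a binary relation on X satisfying the Finiteness axiom. Let B be a ℤ-linear endomorphism of the free ℤ-module on X (the module of finitely supported functions X → ℤ) such that for all x, y ∈ X, if the coefficient of y in B(δ_x) is nonzero, where δ_x denotes the basis element supported at x, then R x y. Then B is locally nilpotent: for every element v of the module there exists n ∈ ℕ with Bⁿ v = 0. -/

import Mathlib

/-- Let `R` be a binary relation on `X` satisfying the Finiteness axiom (for
every `x₀`, the set of `R`-chains starting at `x₀` is finite).  If `B` is a `ℤ`-linear
endomorphism of the free `ℤ`-module on `X` such that the coefficient of `y` in
`B (δ x)` is nonzero only when `R x y`, then `B` is locally nilpotent. -/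
theorem stmt1 {X : Type*} (R : X → X → Prop)
    (hfin : ∀ x₀ : X, {l : List X | l ≠ [] ∧ List.Chain R x₀ l}.Finite)
    (B : Module.End ℤ (X →₀ ℤ))
    (hB : ∀ x y : X, B (Finsupp.single x 1) y ≠ 0 → R x y) :
    ∀ v : X →₀ ℤ, ∃ n : ℕ, (B ^ n) v = 0 := by
  classical
  have key : ∀ n : ℕ, ∀ x y : X, (B ^ n) (Finsupp.single x 1) y ≠ 0 →
      n = 0 ∨ ∃ l : List X, l.length = n ∧ l ≠ [] ∧ List.Chain R x l := by
    intro n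
    induction n with
    | zero => intro x y _; exact Or.inl rfl
    | succ n ih =>
      intro x y h
      right
      rw [pow_succ, Module.End.mul_apply] at h
      have hdecomp : (B ^ n) (B (Finsupp.single x 1)) =
          (B (Finsupp.single x 1)).sum (fun z c => c • (B ^ n) (Finsupp.single z 1)) := by
        conv_lhs => rw [← Finsupp.sum_single (B (Finsupp.single x 1))]
        rw [map_finsuppSum]
        refine Finsupp.sum_congr fun z _ => ?_
        rw [← Finsupp.smul_single_one, map_smul]
      rw [hdecomp] at h
      rw [Finsupp.sum_apply] at h
      have := Finset.exists_ne_zero_of_sum_ne_zero h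
      obtain ⟨z, hz, hnz⟩ := this
      simp only [Finsupp.smul_apply, smul_eq_mul] at hnz
      have hz1 : B (Finsupp.single x 1) z ≠ 0 := left_ne_zero_of_mul hnz
      have hz2 : (B ^ n) (Finsupp.single z 1) y ≠ 0 := right_ne_zero_of_mul hnz
      have hRxz : R x z := hB x z hz1
      rcases ih z y hz2 with h0 | ⟨l, hlen, _, hchain⟩
      · exact ⟨[z], by simp [h0], by simp, List.Chain.cons hRxz List.Chain.nil⟩
      · exact ⟨z :: l, by simp [hlen], by simp, List.Chain.cons hRxz hchain⟩
  have vanish : ∀ x : X, ∃ n : ℕ, (B ^ n) (Finsupp.single x 1) = 0 := by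
    intro x
    refine ⟨(hfin x).toFinset.sup List.length + 1, ?_⟩
    ext y
    rw [Finsupp.zero_apply]
    by_contra h
    rcases key _ x y h with h0 | ⟨l, hlen, hne, hchain⟩
    · omega
    · have hmem : l ∈ (hfin x).toFinset := by
        rw [Set.Finite.mem_toFinset]; exact ⟨hne, hchain⟩
      have := Finset.le_sup (f := List.length) hmem
      omega
  choose f hf using vanish
  have mono : ∀ (x : X) (m : ℕ), f x ≤ m → (B ^ m) (Finsupp.single x 1) = 0 := by
    intro x m hm
    obtain ⟨k, rfl⟩ := Nat.exists_eq_add_of_le hm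
    rw [add_comm, pow_add, Module.End.mul_apply, hf, map_zero]
  intro v
  refine ⟨v.support.sup f, ?_⟩
  have hv : (B ^ v.support.sup f) v
      = (B ^ v.support.sup f) (v.sum Finsupp.single) := by
    rw [Finsupp.sum_single]
  rw [hv, map_finsuppSum]
  apply Finset.sum_eq_zero
  intro x hx
  simp only
  rw [← Finsupp.smul_single_one, map_smul,
    mono x _ (Finset.le_sup (f := f) hx), smul_zero]
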